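/- Let O : S → R be a linear operator between finite dimensional Hilbert spaces, n_t ≥ 1 an integer, 0 < ε_fail < 1, and define the randomized norm estimator Δ := c · max_{i=1..n_t} ||O D_S^{-1} r_i||_R where r_1,...,r_{n_t} are independent standard Gaussian vectors and c := (sqrt(2 λ_min(M_S)) · erf^{-1}(ε_fail^{1/n_t}))^{-1}. Then the probability that Δ < ||O|| is at most ε_fail, i.e. P(||O|| ≤ Δ) ≥ 1 − ε_fail. -/

import Mathlib

open Matrix MeasureTheory ProbabilityTheory

/-- The norm on `ℝ^n` induced by a (positive definite) inner product matrix `Mmat`. -/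
noncomputable def matNorm {n : ℕ} (Mmat : Matrix (Fin n) (Fin n) ℝ) (x : Fin n → ℝ) : ℝ :=
  Real.sqrt (x ⬝ᵥ Mmat.mulVec x)

/-- The error function. -/
noncomputable def erf (x : ℝ) : ℝ :=
  (2 / Real.sqrt Real.pi) * ∫ t in (0 : ℝ)..x, Real.exp (-t ^ 2)

/-- The standard Gaussian measure on `ℝ^n` (i.i.d. `N(0,1)` entries). -/
noncomputable def gaussianVec (n : ℕ) : Measure (Fin n → ℝ) :=
  Measure.pi fun _ => gaussianReal 0 1

instance (n : ℕ) : IsProbabilityMeasure (gaussianVec n) := by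
  unfold gaussianVec; infer_instance

open Real
open scoped NNReal ENNReal

section Aux

/-- Cauchy–Schwarz for a nonnegative symmetric bilinear form given by a matrix. -/
lemma cs_aux {n : ℕ} {M : Matrix (Fin n) (Fin n) ℝ}
    (hpos : ∀ z : Fin n → ℝ, 0 ≤ z ⬝ᵥ M.mulVec z)
    (hsymm : ∀ z y : Fin n → ℝ, z ⬝ᵥ M.mulVec y = y ⬝ᵥ M.mulVec z)
    (u y : Fin n → ℝ) :
    |u ⬝ᵥ M.mulVec y| ≤ matNorm M u * matNorm M y := by
  set a : ℝ := u ⬝ᵥ M.mulVec u with ha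
  set b : ℝ := u ⬝ᵥ M.mulVec y with hb
  set c : ℝ := y ⬝ᵥ M.mulVec y with hc
  have key : ∀ t : ℝ, 0 ≤ c * (t * t) + (2 * b) * t + a := by
    intro t
    have h0 := hpos (u + t • y)
    have expand : (u + t • y) ⬝ᵥ M.mulVec (u + t • y) = c * (t * t) + (2 * b) * t + a := by
      simp only [Matrix.mulVec_add, Matrix.mulVec_smul, add_dotProduct, dotProduct_add,
        smul_dotProduct, dotProduct_smul, smul_eq_mul]
      rw [hsymm y u]
      simp only [← ha, ← hb, ← hc]
      ring
    linarith [expand ▸ h0]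
  have hd := discrim_le_zero key
  have hb2 : b ^ 2 ≤ a * c := by
    simp only [discrim] at hd
    nlinarith
  have habs : |b| ≤ Real.sqrt (a * c) := by
    rw [← Real.sqrt_sq_eq_abs]
    exact Real.sqrt_le_sqrt hb2
  calc |b| ≤ Real.sqrt (a * c) := habs
    _ = matNorm M u * matNorm M y := by
        rw [matNorm, matNorm, ← Real.sqrt_mul (hpos u)]

lemma matNorm_nonneg {n : ℕ} (M : Matrix (Fin n) (Fin n) ℝ) (x : Fin n → ℝ) :
    0 ≤ matNorm M x := Real.sqrt_nonneg _

lemma matNorm_smul {n : ℕ} (M : Matrix (Fin n) (Fin n) ℝ) (a : ℝ) (x : Fin n → ℝ) :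
    matNorm M (a • x) = |a| * matNorm M x := by
  unfold matNorm
  rw [Matrix.mulVec_smul, dotProduct_smul, smul_dotProduct, smul_eq_mul, smul_eq_mul,
    ← mul_assoc, show a * a = a ^ 2 by ring, Real.sqrt_mul (sq_nonneg a), Real.sqrt_sq_eq_abs]

lemma matNorm_sq {n : ℕ} {M : Matrix (Fin n) (Fin n) ℝ} {x : Fin n → ℝ}
    (h : 0 ≤ x ⬝ᵥ M.mulVec x) : matNorm M x ^ 2 = x ⬝ᵥ M.mulVec x := Real.sq_sqrt h

/-- Monotonicity of the error function. -/
lemma erf_mono {x y : ℝ} (hxy : x ≤ y) : erf x ≤ erf y := by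
  unfold erf
  have hint : ∀ a b : ℝ, IntervalIntegrable (fun t => Real.exp (-t ^ 2)) volume a b :=
    fun a b => (Continuous.intervalIntegrable (by continuity) a b)
  have h2 : (0:ℝ) ≤ 2 / Real.sqrt Real.pi := by positivity
  refine mul_le_mul_of_nonneg_left ?_ h2
  rw [← intervalIntegral.integral_add_adjacent_intervals (hint 0 x) (hint x y)]
  have : 0 ≤ ∫ t in x..y, Real.exp (-t ^ 2) :=
    intervalIntegral.integral_nonneg hxy (fun u _ => (Real.exp_pos _).le)
  linarith

lemma pdf_mul (v1 v2 : ℝ≥0) (hv1 : v1 ≠ 0) (hv2 : v2 ≠ 0) (z x : ℝ) :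
    gaussianPDFReal 0 v1 x * gaussianPDFReal 0 v2 (z - x)
      = gaussianPDFReal 0 (v1 + v2) z *
        gaussianPDFReal ((v1 : ℝ) * z / ((v1 : ℝ) + v2)) (v1 * v2 / (v1 + v2)) x := by
  have hp : (0:ℝ) < v1 := NNReal.coe_pos.mpr (pos_iff_ne_zero.mpr hv1)
  have hq : (0:ℝ) < v2 := NNReal.coe_pos.mpr (pos_iff_ne_zero.mpr hv2)
  simp only [gaussianPDFReal]
  push_cast [NNReal.coe_div, NNReal.coe_mul, NNReal.coe_add]
  set p := (v1 : ℝ)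
  set q := (v2 : ℝ)
  have hpq : 0 < p + q := by linarith
  have hsqrt : Real.sqrt (2 * π * p) * Real.sqrt (2 * π * q)
      = Real.sqrt (2 * π * (p + q)) * Real.sqrt (2 * π * (p * q / (p + q))) := by
    rw [← Real.sqrt_mul (by positivity), ← Real.sqrt_mul (by positivity)]
    congr 1
    field_simp
  have hexp : -(x - 0) ^ 2 / (2 * p) + -(z - x - 0) ^ 2 / (2 * q)
      = -(z - 0) ^ 2 / (2 * (p + q)) + -(x - p * z / (p + q)) ^ 2 / (2 * (p * q / (p + q))) := by
    field_simp
    ring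
  calc (Real.sqrt (2 * π * p))⁻¹ * rexp (-(x - 0) ^ 2 / (2 * p)) *
        ((Real.sqrt (2 * π * q))⁻¹ * rexp (-(z - x - 0) ^ 2 / (2 * q)))
      = (Real.sqrt (2 * π * p) * Real.sqrt (2 * π * q))⁻¹ *
          rexp (-(x - 0) ^ 2 / (2 * p) + -(z - x - 0) ^ 2 / (2 * q)) := by
        rw [Real.exp_add, mul_inv]; ring
    _ = (Real.sqrt (2 * π * (p + q)) * Real.sqrt (2 * π * (p * q / (p + q))))⁻¹ *
          rexp (-(z - 0) ^ 2 / (2 * (p + q)) + -(x - p * z / (p + q)) ^ 2 /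
            (2 * (p * q / (p + q)))) := by rw [hsqrt, hexp]
    _ = _ := by rw [Real.exp_add, mul_inv]; ring

lemma conv_pdf (v1 v2 : ℝ≥0) (hv1 : v1 ≠ 0) (hv2 : v2 ≠ 0) (z : ℝ) :
    ∫ x, gaussianPDFReal 0 v1 x * gaussianPDFReal 0 v2 (z - x)
      = gaussianPDFReal 0 (v1 + v2) z := by
  have hw : v1 * v2 / (v1 + v2) ≠ 0 := by
    refine div_ne_zero (mul_ne_zero hv1 hv2) ?_
    simp [hv1]
  simp_rw [pdf_mul v1 v2 hv1 hv2 z]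
  rw [MeasureTheory.integral_const_mul, integral_gaussianPDFReal_eq_one _ hw, mul_one]

lemma integrable_conv_pdf (v1 v2 : ℝ≥0) (hv1 : v1 ≠ 0) (hv2 : v2 ≠ 0) (z : ℝ) :
    Integrable (fun x => gaussianPDFReal 0 v1 x * gaussianPDFReal 0 v2 (z - x)) := by
  simp_rw [pdf_mul v1 v2 hv1 hv2 z]
  exact (integrable_gaussianPDFReal _ _).const_mul _

lemma gaussian_conv (v1 v2 : ℝ≥0) :
    Measure.map (fun p : ℝ × ℝ => p.1 + p.2)
        ((gaussianReal 0 v1).prod (gaussianReal 0 v2)) = gaussianReal 0 (v1 + v2) := by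
  have hadd : Measurable fun p : ℝ × ℝ => p.1 + p.2 := measurable_fst.add measurable_snd
  rcases eq_or_ne v1 0 with rfl | hv1
  · rw [gaussianReal_zero_var, Measure.dirac_prod, Measure.map_map hadd (measurable_prodMk_left),
      zero_add]
    simp only [Function.comp_def, zero_add]
    exact Measure.map_id
  rcases eq_or_ne v2 0 with rfl | hv2
  · rw [gaussianReal_zero_var, Measure.prod_dirac, Measure.map_map hadd (measurable_prodMk_right),
      add_zero]
    simp only [Function.comp_def, add_zero]
    exact Measure.map_id
  have hvsum : v1 + v2 ≠ 0 := by simp [hv1]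
  ext s hs
  rw [Measure.map_apply hadd hs, Measure.prod_apply (hadd hs)]
  have step1 : ∀ x : ℝ, gaussianReal 0 v2 (Prod.mk x ⁻¹' ((fun p : ℝ × ℝ => p.1 + p.2) ⁻¹' s))
      = ∫⁻ z in s, gaussianPDF 0 v2 (z - x) := by
    intro x
    have hpre : Prod.mk x ⁻¹' ((fun p : ℝ × ℝ => p.1 + p.2) ⁻¹' s) = (fun y => x + y) ⁻¹' s := rfl
    rw [hpre, gaussianReal_apply _ hv2]
    have hmp : MeasurePreserving (fun y : ℝ => x + y) volume volume :=
      measurePreserving_add_left volume x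
    have hemb : MeasurableEmbedding (fun y : ℝ => x + y) :=
      (MeasurableEquiv.addLeft x).measurableEmbedding
    have := hmp.setLIntegral_comp_preimage_emb hemb (fun z => gaussianPDF 0 v2 (z - x)) s
    simp only [add_sub_cancel_left] at this
    exact this
  simp_rw [step1]
  have hmeas : Measurable fun x : ℝ => ∫⁻ z in s, gaussianPDF 0 v2 (z - x) :=
    Measurable.lintegral_prod_right
      ((measurable_gaussianPDF 0 v2).comp (measurable_snd.sub measurable_fst))
  rw [gaussianReal_of_var_ne_zero _ hv1,
    lintegral_withDensity_eq_lintegral_mul _ (measurable_gaussianPDF _ _) hmeas]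
  simp only [Pi.mul_apply]
  have hpull : ∀ a : ℝ, gaussianPDF 0 v1 a * ∫⁻ z in s, gaussianPDF 0 v2 (z - a)
      = ∫⁻ z in s, gaussianPDF 0 v1 a * gaussianPDF 0 v2 (z - a) := fun a =>
    (lintegral_const_mul _ ((measurable_gaussianPDF 0 v2).comp
      (measurable_id.sub measurable_const))).symm
  simp_rw [hpull]
  rw [lintegral_lintegral_swap (((measurable_gaussianPDF 0 v1).comp measurable_fst).mul
    ((measurable_gaussianPDF 0 v2).comp (measurable_snd.sub measurable_fst))).aemeasurable]
  have hinner : ∀ z : ℝ, ∫⁻ a, gaussianPDF 0 v1 a * gaussianPDF 0 v2 (z - a)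
      = gaussianPDF 0 (v1 + v2) z := by
    intro z
    simp_rw [gaussianPDF,
      ← ENNReal.ofReal_mul (gaussianPDFReal_nonneg 0 v1 _)]
    rw [← ofReal_integral_eq_lintegral_ofReal (integrable_conv_pdf v1 v2 hv1 hv2 z)
      (ae_of_all _ fun a => mul_nonneg (gaussianPDFReal_nonneg _ _ _)
        (gaussianPDFReal_nonneg _ _ _)), conv_pdf v1 v2 hv1 hv2 z]
  simp_rw [hinner]
  exact (gaussianReal_apply _ hvsum s).symm

lemma measurable_dotProduct {n : ℕ} (w : Fin n → ℝ) :
    Measurable fun x : Fin n → ℝ => w ⬝ᵥ x := by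
  unfold dotProduct
  exact Finset.measurable_sum _ fun i _ => by fun_prop

lemma gaussianVec_map_dotProduct : ∀ (n : ℕ) (w : Fin n → ℝ) (V : ℝ≥0),
    ((V : ℝ) = ∑ i, w i ^ 2) →
    Measure.map (fun x => w ⬝ᵥ x) (gaussianVec n) = gaussianReal 0 V := by
  intro n
  induction n with
  | zero =>
    intro w V hV
    have hV0 : V = 0 := by
      have : (V : ℝ) = 0 := by rw [hV]; simp
      exact_mod_cast this
    have hw : (fun x : Fin 0 → ℝ => w ⬝ᵥ x) = fun _ => (0 : ℝ) := by
      funext x; simp [dotProduct]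
    rw [hw, Measure.map_const, measure_univ, one_smul, hV0, gaussianReal_zero_var]
  | succ n ih =>
    intro w V hV
    set e := MeasurableEquiv.piFinSuccAbove (fun _ : Fin (n + 1) => ℝ) 0 with he
    have hmp : MeasurePreserving e (gaussianVec (n + 1))
        ((gaussianReal 0 1).prod (gaussianVec n)) :=
      measurePreserving_piFinSuccAbove (fun _ : Fin (n + 1) => gaussianReal 0 1) 0
    set g : ℝ × (Fin n → ℝ) → ℝ := fun p => w 0 * p.1 + (w ∘ Fin.succ) ⬝ᵥ p.2 with hg
    have hcomp : (fun x : Fin (n + 1) → ℝ => w ⬝ᵥ x) = g ∘ e := by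
      funext x
      simp only [Function.comp_apply, hg, he, MeasurableEquiv.piFinSuccAbove_apply]
      rw [dotProduct, Fin.sum_univ_succ]
      simp [dotProduct, Fin.zero_succAbove, Fin.removeNth, Fin.tail]
    have hgm : Measurable g := by
      apply Measurable.add
      · exact measurable_fst.const_mul _
      · exact (measurable_dotProduct (w ∘ Fin.succ)).comp measurable_snd
    rw [hcomp, ← Measure.map_map hgm e.measurable, hmp.map_eq]
    set Vt : ℝ≥0 := ⟨∑ j : Fin n, w j.succ ^ 2, by positivity⟩ with hVt
    have htail : Measure.map (fun x => (w ∘ Fin.succ) ⬝ᵥ x) (gaussianVec n)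
        = gaussianReal 0 Vt := ih (w ∘ Fin.succ) Vt rfl
    have hhead : Measure.map (fun a : ℝ => w 0 * a) (gaussianReal 0 1)
        = gaussianReal 0 (NNReal.mk (w 0 ^ 2) (sq_nonneg _)) := by
      rw [gaussianReal_map_const_mul (w 0)]
      norm_num
    have hsplit : g = (fun p : ℝ × ℝ => p.1 + p.2) ∘
        (Prod.map (fun a : ℝ => w 0 * a) (fun x => (w ∘ Fin.succ) ⬝ᵥ x)) := rfl
    rw [hsplit, ← Measure.map_map (g := fun p : ℝ × ℝ => p.1 + p.2) (measurable_fst.add measurable_snd)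
      ((measurable_const_mul _).prodMap (measurable_dotProduct _)),
      ← Measure.map_prod_map _ _ (measurable_const_mul _) (measurable_dotProduct _),
      htail, hhead, gaussian_conv]
    congr 1
    ext1
    rw [hV]
    push_cast [hVt]
    rw [Fin.sum_univ_succ]
    rfl

lemma gaussianReal_abs_lt (v : ℝ≥0) (hv : v ≠ 0) (t : ℝ) (ht : 0 ≤ t) :
    gaussianReal 0 v {y : ℝ | |y| < t}
      = ENNReal.ofReal (erf (t / Real.sqrt (2 * v))) := by
  have hvp : (0:ℝ) < v := NNReal.coe_pos.mpr (pos_iff_ne_zero.mpr hv)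
  have hset : {y : ℝ | |y| < t} = Set.Ioo (-t) t := by ext y; simp [abs_lt]
  rw [hset, gaussianReal_apply_eq_integral _ hv]
  congr 1
  set s := Real.sqrt (2 * v) with hs
  have hsp : 0 < s := Real.sqrt_pos.mpr (by positivity)
  have hs2 : s ^ 2 = 2 * v := Real.sq_sqrt (by positivity)
  have hpdf : ∀ y : ℝ, gaussianPDFReal 0 v y
      = (Real.sqrt π)⁻¹ * s⁻¹ * Real.exp (-(y / s) ^ 2) := by
    intro y
    rw [gaussianPDFReal]
    have h1 : 2 * π * (v:ℝ) = π * s ^ 2 := by rw [hs2]; ring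
    have h2 : Real.sqrt (2 * π * v) = Real.sqrt π * s := by
      rw [h1, Real.sqrt_mul Real.pi_pos.le, Real.sqrt_sq hsp.le]
    rw [h2, sub_zero, mul_inv]
    congr 1
    rw [div_pow, hs2]
    ring_nf
  have hIoo : (∫ y in Set.Ioo (-t) t, gaussianPDFReal 0 v y)
      = ∫ y in (-t)..t, gaussianPDFReal 0 v y := by
    rw [intervalIntegral.integral_of_le (by linarith), ← integral_Ioc_eq_integral_Ioo]
  rw [hIoo]
  simp_rw [hpdf]
  rw [intervalIntegral.integral_const_mul]
  have hcomp : (∫ y in (-t)..t, Real.exp (-(y / s) ^ 2))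
      = s * ∫ u in (-t/s)..(t/s), Real.exp (-u ^ 2) := by
    rw [intervalIntegral.integral_comp_div (fun u => Real.exp (-u ^ 2)) hsp.ne', smul_eq_mul]
  have hint : ∀ a b : ℝ, IntervalIntegrable (fun u => Real.exp (-u ^ 2)) volume a b :=
    fun a b => Continuous.intervalIntegrable (by continuity) a b
  have heven : (∫ u in (-(t/s))..(0:ℝ), Real.exp (-u ^ 2))
      = ∫ u in (0:ℝ)..(t/s), Real.exp (-u ^ 2) := by
    have := intervalIntegral.integral_comp_neg (a := 0) (b := t/s) (fun u => Real.exp (-u ^ 2))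
    simp only [neg_neg, neg_sq, neg_zero] at this ⊢
    rw [← this]
  have hsplit : (∫ u in (-(t/s))..(t/s), Real.exp (-u ^ 2))
      = 2 * ∫ u in (0:ℝ)..(t/s), Real.exp (-u ^ 2) := by
    rw [← intervalIntegral.integral_add_adjacent_intervals (hint (-(t/s)) 0) (hint 0 (t/s)),
      heven]
    ring
  rw [hcomp, neg_div] at *
  rw [hsplit]
  rw [erf]
  field_simp

end Aux

set_option maxHeartbeats 2000000 in
/-- the randomized a posteriori norm estimator
`Δ = c · max_i ‖O D_S⁻¹ r_i‖_R` with
`c = (sqrt(2 λmin(M_S)) · erf⁻¹(ε_fail^{1/n_t}))⁻¹`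
is an upper bound of the operator norm `‖O‖` with probability at least `1 − ε_fail`. -/
theorem randomized_norm_estimator_reliable
    {nS nR : ℕ} (A : Matrix (Fin nR) (Fin nS) ℝ)
    (MS : Matrix (Fin nS) (Fin nS) ℝ) (MR : Matrix (Fin nR) (Fin nR) ℝ)
    (hMS : MS.PosDef) (hMR : MR.PosDef)
    (lamMin : ℝ) (hlamMin : 0 < lamMin)
    (hmin : ∀ x : Fin nS → ℝ, lamMin * (x ⬝ᵥ x) ≤ x ⬝ᵥ MS.mulVec x)
    (nt : ℕ) (hnt : 1 ≤ nt) (ε : ℝ) (hε0 : 0 < ε) (hε1 : ε < 1)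
    (c : ℝ) (hc0 : 0 < c)
    (hc : erf (1 / (c * Real.sqrt (2 * lamMin))) = ε ^ ((1 : ℝ) / nt)) :
    1 - ENNReal.ofReal ε ≤
      (Measure.pi fun _ : Fin nt => gaussianVec nS)
        {ω | (⨆ x : {x : Fin nS → ℝ // x ≠ 0}, matNorm MR (A.mulVec x.1) / matNorm MS x.1)
              ≤ c * ⨆ i : Fin nt, matNorm MR (A.mulVec (ω i))} := by
  classical
  set μ := (Measure.pi fun _ : Fin nt => gaussianVec nS) with hμ
  set f : (Fin nS → ℝ) → ℝ := fun x => matNorm MR (A.mulVec x) with hf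
  set gS : (Fin nS → ℝ) → ℝ := fun x => matNorm MS x with hgS
  set N : ℝ := ⨆ x : {x : Fin nS → ℝ // x ≠ 0}, f x.1 / gS x.1 with hN
  have hf0 : ∀ x, 0 ≤ f x := fun x => matNorm_nonneg _ _
  have hsup0 : ∀ ω : Fin nt → (Fin nS → ℝ), 0 ≤ ⨆ i, f (ω i) :=
    fun ω => Real.iSup_nonneg fun i => hf0 _
  by_cases hNpos : N ≤ 0
  · have hset : {ω : Fin nt → (Fin nS → ℝ) | N ≤ c * ⨆ i, f (ω i)} = Set.univ :=
      Set.eq_univ_of_forall fun ω =>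
        le_trans hNpos (mul_nonneg hc0.le (hsup0 ω))
    rw [hset, measure_univ]
    exact tsub_le_self
  push_neg at hNpos
  -- nonemptiness of the index type
  haveI hne : Nonempty {x : Fin nS → ℝ // x ≠ 0} := by
    by_contra h
    rw [not_nonempty_iff] at h
    rw [hN, Real.iSup_of_isEmpty] at hNpos
    exact lt_irrefl _ hNpos
  -- basic quadratic form facts
  have hMSpos : ∀ x : Fin nS → ℝ, 0 ≤ x ⬝ᵥ MS.mulVec x := by
    intro x
    refine le_trans ?_ (hmin x)
    have : 0 ≤ x ⬝ᵥ x := Finset.sum_nonneg fun i _ => mul_self_nonneg _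
    positivity
  have hMRpos : ∀ z : Fin nR → ℝ, 0 ≤ z ⬝ᵥ MR.mulVec z := by
    intro z
    rcases eq_or_ne z 0 with rfl | hz
    · simp
    · exact (hMR.re_dotProduct_pos hz).le
  have hMRsymm : ∀ z y : Fin nR → ℝ, z ⬝ᵥ MR.mulVec y = y ⬝ᵥ MR.mulVec z := by
    intro z y
    have hsym : MRᵀ = MR := hMR.isHermitian
    rw [dotProduct_mulVec, ← hsym, vecMul_transpose, dotProduct_comm, hsym]
  -- continuity
  have hmvc : ∀ {m k : ℕ} (B : Matrix (Fin m) (Fin k) ℝ),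
      Continuous fun x : Fin k → ℝ => B.mulVec x := by
    intro m k B
    refine continuous_pi fun i => ?_
    simp only [Matrix.mulVec, dotProduct]
    exact continuous_finset_sum _ fun j _ => continuous_const.mul (continuous_apply j)
  have hquadc : ∀ {m : ℕ} (B : Matrix (Fin m) (Fin m) ℝ),
      Continuous fun x : Fin m → ℝ => x ⬝ᵥ B.mulVec x := by
    intro m B
    simp only [dotProduct]
    exact continuous_finset_sum _ fun j _ =>
      (continuous_apply j).mul ((continuous_apply j).comp (hmvc B))
  have hfc : Continuous f := Real.continuous_sqrt.comp ((hquadc MR).comp (hmvc A))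
  have hgc : Continuous gS := Real.continuous_sqrt.comp (hquadc MS)
  -- the constraint set is compact
  set K : Set (Fin nS → ℝ) := {x | gS x = 1} with hK
  have hgS_pos : ∀ x : Fin nS → ℝ, x ≠ 0 → 0 < gS x := by
    intro x hx
    exact Real.sqrt_pos.mpr (hMS.re_dotProduct_pos hx)
  have hKne : K.Nonempty := by
    obtain ⟨x₀, hx₀⟩ := hne
    refine ⟨(gS x₀)⁻¹ • x₀, ?_⟩
    have h := hgS_pos x₀ hx₀
    show matNorm MS ((gS x₀)⁻¹ • x₀) = 1
    rw [matNorm_smul, abs_of_pos (by positivity)]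
    exact inv_mul_cancel₀ h.ne'
  have hKcompact : IsCompact K := by
    have hclosed : IsClosed K := isClosed_singleton.preimage hgc
    have hbdd : K ⊆ Metric.closedBall 0 (Real.sqrt (1 / lamMin)) := by
      intro x hx
      have hq1 : x ⬝ᵥ MS.mulVec x = 1 := by
        have := matNorm_sq (hMSpos x)
        rw [show matNorm MS x = gS x from rfl, hx] at this
        linarith [this.symm]
      have hxx : x ⬝ᵥ x ≤ 1 / lamMin := by
        have := hmin x
        rw [hq1] at this
        rw [le_div_iff₀ hlamMin]
        linarith
      rw [Metric.mem_closedBall, dist_zero_right]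
      rw [pi_norm_le_iff_of_nonneg (Real.sqrt_nonneg _)]
      intro i
      rw [Real.norm_eq_abs]
      refine Real.abs_le_sqrt ?_
      refine le_trans ?_ hxx
      calc x i ^ 2 = x i * x i := sq (x i) ▸ by ring
        _ ≤ ∑ j, x j * x j :=
          Finset.single_le_sum (fun j _ => mul_self_nonneg (x j)) (Finset.mem_univ i)
        _ = x ⬝ᵥ x := rfl
    exact Metric.isCompact_of_isClosed_isBounded hclosed
      (Metric.isBounded_closedBall.subset hbdd)
  obtain ⟨v, hvK, hvmax⟩ := hKcompact.exists_isMaxOn hKne hfc.continuousOn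
  have hvg : gS v = 1 := hvK
  have hvne : v ≠ 0 := by
    intro h
    rw [h] at hvg
    simp [hgS, matNorm] at hvg
  -- N ≤ f v
  have hNle : N ≤ f v := by
    rw [hN]
    refine ciSup_le fun x => ?_
    obtain ⟨x, hx⟩ := x
    have hgx := hgS_pos x hx
    have hmem : (gS x)⁻¹ • x ∈ K := by
      show matNorm MS ((gS x)⁻¹ • x) = 1
      rw [matNorm_smul, abs_of_pos (by positivity)]
      exact inv_mul_cancel₀ hgx.ne'
    have : f ((gS x)⁻¹ • x) = f x / gS x := by
      show matNorm MR (A.mulVec ((gS x)⁻¹ • x)) = matNorm MR (A.mulVec x) / gS x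
      rw [Matrix.mulVec_smul, matNorm_smul, abs_of_pos (by positivity), div_eq_inv_mul]
    calc f x / gS x = f ((gS x)⁻¹ • x) := this.symm
      _ ≤ f v := hvmax hmem
  set Nv : ℝ := f v with hNv
  have hNvpos : 0 < Nv := lt_of_lt_of_le hNpos hNle
  have hquadv : v ⬝ᵥ MS.mulVec v = 1 := by
    have := matNorm_sq (hMSpos v)
    rw [show matNorm MS v = gS v from rfl, hvg] at this
    linarith [this.symm]
  have hAvquad : (A.mulVec v) ⬝ᵥ MR.mulVec (A.mulVec v) = Nv ^ 2 :=
    (matNorm_sq (hMRpos (A.mulVec v))).symm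
  -- the test vector
  set w : Fin nS → ℝ := Nv⁻¹ • (Aᵀ.mulVec (MR.mulVec (A.mulVec v))) with hw
  have hwdot : ∀ ω : Fin nS → ℝ,
      w ⬝ᵥ ω = Nv⁻¹ * ((A.mulVec v) ⬝ᵥ MR.mulVec (A.mulVec ω)) := by
    intro ω
    rw [hw, smul_dotProduct, smul_eq_mul]
    congr 1
    rw [Matrix.mulVec_transpose, ← Matrix.dotProduct_mulVec, dotProduct_comm, hMRsymm]
  have ha : ∀ ω : Fin nS → ℝ, |w ⬝ᵥ ω| ≤ f ω := by
    intro ω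
    rw [hwdot, abs_mul, abs_of_pos (by positivity)]
    have hcs := cs_aux hMRpos hMRsymm (A.mulVec v) (A.mulVec ω)
    calc Nv⁻¹ * |(A.mulVec v) ⬝ᵥ MR.mulVec (A.mulVec ω)|
        ≤ Nv⁻¹ * (matNorm MR (A.mulVec v) * matNorm MR (A.mulVec ω)) := by
          exact mul_le_mul_of_nonneg_left hcs (by positivity)
      _ = f ω := by
          rw [show matNorm MR (A.mulVec v) = Nv from rfl]
          field_simp
          rfl
  -- lower bound on the Euclidean norm of w
  have hwv : w ⬝ᵥ v = Nv := by
    rw [hwdot, hAvquad]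
    field_simp
  have hvv : v ⬝ᵥ v ≤ 1 / lamMin := by
    have := hmin v
    rw [hquadv] at this
    rw [le_div_iff₀ hlamMin]
    linarith
  have hww0 : 0 ≤ w ⬝ᵥ w := Finset.sum_nonneg fun i _ => mul_self_nonneg _
  have hb : Real.sqrt lamMin * Nv ≤ Real.sqrt (w ⬝ᵥ w) := by
    have hcs := cs_aux (M := (1 : Matrix (Fin nS) (Fin nS) ℝ))
      (fun z => by rw [Matrix.one_mulVec]; exact Finset.sum_nonneg fun i _ => mul_self_nonneg _)
      (fun z y => by rw [Matrix.one_mulVec, Matrix.one_mulVec, dotProduct_comm]) w v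
    rw [Matrix.one_mulVec] at hcs
    have h1 : matNorm 1 w = Real.sqrt (w ⬝ᵥ w) := by rw [matNorm, Matrix.one_mulVec]
    have h2 : matNorm 1 v = Real.sqrt (v ⬝ᵥ v) := by rw [matNorm, Matrix.one_mulVec]
    rw [h1, h2, hwv, abs_of_pos hNvpos] at hcs
    have h3 : Real.sqrt (v ⬝ᵥ v) ≤ Real.sqrt (1 / lamMin) := Real.sqrt_le_sqrt hvv
    have h4 : Nv ≤ Real.sqrt (w ⬝ᵥ w) * Real.sqrt (1 / lamMin) := by
      refine le_trans hcs ?_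
      exact mul_le_mul_of_nonneg_left h3 (Real.sqrt_nonneg _)
    have h5 : Real.sqrt (1 / lamMin) = (Real.sqrt lamMin)⁻¹ := by
      rw [one_div, Real.sqrt_inv]
    rw [h5] at h4
    have hsl : 0 < Real.sqrt lamMin := Real.sqrt_pos.mpr hlamMin
    calc Real.sqrt lamMin * Nv
        ≤ Real.sqrt lamMin * (Real.sqrt (w ⬝ᵥ w) * (Real.sqrt lamMin)⁻¹) :=
          mul_le_mul_of_nonneg_left h4 hsl.le
      _ = Real.sqrt (w ⬝ᵥ w) := by field_simp
  -- the variance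
  set V : ℝ≥0 := ⟨w ⬝ᵥ w, hww0⟩ with hV
  have hVcoe : (V : ℝ) = ∑ i, w i ^ 2 := by
    show w ⬝ᵥ w = ∑ i, w i ^ 2
    simp [dotProduct, sq]
  have hsqrtww : 0 < Real.sqrt (w ⬝ᵥ w) :=
    lt_of_lt_of_le (by positivity) hb
  have hwwpos : 0 < w ⬝ᵥ w := Real.sqrt_pos.mp hsqrtww
  have hVne : V ≠ 0 := by
    intro h
    have h2 : (V : ℝ) = 0 := by rw [h]; simp
    have h3 : (V : ℝ) = w ⬝ᵥ w := rfl
    rw [h3] at h2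
    exact (ne_of_gt hwwpos) h2
  set t : ℝ := N / c with htdef
  have ht : 0 < t := div_pos hNpos hc0
  set B : Set (Fin nS → ℝ) := {x | |w ⬝ᵥ x| < t} with hB
  have hmsetY : MeasurableSet {y : ℝ | |y| < t} := by
    have : {y : ℝ | |y| < t} = Set.Ioo (-t) t := by ext y; simp [abs_lt]
    rw [this]; exact measurableSet_Ioo
  -- bound for the argument of erf
  have harg : t / Real.sqrt (2 * (V : ℝ)) ≤ 1 / (c * Real.sqrt (2 * lamMin)) := by
    have hKpos : 0 < Real.sqrt (2 * lamMin) := by positivity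
    have hsq := mul_self_le_mul_self (by positivity : 0 ≤ Real.sqrt lamMin * Nv) hb
    have hl1 : Real.sqrt lamMin * Real.sqrt lamMin = lamMin := Real.mul_self_sqrt hlamMin.le
    have hl2 : Real.sqrt (w ⬝ᵥ w) * Real.sqrt (w ⬝ᵥ w) = w ⬝ᵥ w := Real.mul_self_sqrt hww0
    have hNN : N * N ≤ Nv * Nv := mul_self_le_mul_self hNpos.le hNle
    have e2 : lamMin * (Nv * Nv) ≤ w ⬝ᵥ w := by nlinarith [hsq, hl1, hl2]
    have hlam : lamMin * N ^ 2 ≤ w ⬝ᵥ w := by nlinarith [e2, hNN, hlamMin.le]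
    have h2V : Real.sqrt (2 * lamMin) * N ≤ Real.sqrt (2 * (V : ℝ)) := by
      have e1 : Real.sqrt (2 * lamMin * N ^ 2) = Real.sqrt (2 * lamMin) * N := by
        rw [Real.sqrt_mul (by positivity : (0:ℝ) ≤ 2 * lamMin), Real.sqrt_sq hNpos.le]
      rw [← e1]
      refine Real.sqrt_le_sqrt ?_
      have h3 : (V : ℝ) = w ⬝ᵥ w := rfl
      rw [h3]
      nlinarith
    have hstep : t / Real.sqrt (2 * (V : ℝ)) ≤ t / (Real.sqrt (2 * lamMin) * N) :=
      div_le_div_of_nonneg_left ht.le (by positivity) h2V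
    refine le_trans hstep (le_of_eq ?_)
    rw [htdef]
    field_simp
  -- measure of the single-test failure set
  have hBmap : gaussianVec nS B = ENNReal.ofReal (erf (t / Real.sqrt (2 * (V : ℝ)))) := by
    have hBpre : B = (fun x => w ⬝ᵥ x) ⁻¹' {y : ℝ | |y| < t} := rfl
    rw [hBpre, ← Measure.map_apply (measurable_dotProduct w) hmsetY,
      gaussianVec_map_dotProduct nS w V hVcoe, gaussianReal_abs_lt V hVne t ht.le]
  have hBle : gaussianVec nS B ≤ ENNReal.ofReal (ε ^ ((1 : ℝ) / nt)) := by
    rw [hBmap, ← hc]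
    exact ENNReal.ofReal_le_ofReal (erf_mono harg)
  -- the total failure probability
  have hbadtotal : μ (Set.univ.pi fun _ : Fin nt => B) ≤ ENNReal.ofReal ε := by
    rw [hμ, Measure.pi_pi]
    calc ∏ _i : Fin nt, gaussianVec nS B
        ≤ ∏ _i : Fin nt, ENNReal.ofReal (ε ^ ((1 : ℝ) / nt)) :=
          Finset.prod_le_prod' fun i _ => hBle
      _ = ENNReal.ofReal (ε ^ ((1 : ℝ) / nt)) ^ nt := by
          simp [Finset.prod_const]
      _ = ENNReal.ofReal ((ε ^ ((1 : ℝ) / nt)) ^ nt) :=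
          (ENNReal.ofReal_pow (by positivity) nt).symm
      _ = ENNReal.ofReal ε := by
          rw [← Real.rpow_natCast (ε ^ ((1 : ℝ) / nt)) nt, ← Real.rpow_mul hε0.le, one_div,
            inv_mul_cancel₀ (Nat.cast_ne_zero.mpr (by omega)), Real.rpow_one]
  -- covering the whole space
  have hsub : (Set.univ : Set (Fin nt → Fin nS → ℝ)) ⊆
      {ω | N ≤ c * ⨆ i, f (ω i)} ∪ Set.univ.pi fun _ : Fin nt => B := by
    intro ω _
    by_cases hgood : N ≤ c * ⨆ i, f (ω i)
    · exact Or.inl hgood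
    · refine Or.inr fun i _ => ?_
      push_neg at hgood
      have hi : f (ω i) ≤ ⨆ j, f (ω j) :=
        le_ciSup (f := fun j => f (ω j)) (Set.Finite.bddAbove (Set.finite_range _)) i
      have h1 : c * f (ω i) ≤ c * ⨆ j, f (ω j) := mul_le_mul_of_nonneg_left hi hc0.le
      have h2 : c * f (ω i) < N := lt_of_le_of_lt h1 hgood
      have h3 : |w ⬝ᵥ ω i| ≤ f (ω i) := ha (ω i)
      show |w ⬝ᵥ ω i| < t
      rw [htdef, lt_div_iff₀ hc0]
      calc |w ⬝ᵥ ω i| * c = c * |w ⬝ᵥ ω i| := by ring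
        _ ≤ c * f (ω i) := mul_le_mul_of_nonneg_left h3 hc0.le
        _ < N := h2
  rw [tsub_le_iff_right]
  calc (1 : ℝ≥0∞) = μ Set.univ := measure_univ.symm
    _ ≤ μ ({ω | N ≤ c * ⨆ i, f (ω i)} ∪ Set.univ.pi fun _ : Fin nt => B) :=
        measure_mono hsub
    _ ≤ μ {ω | N ≤ c * ⨆ i, f (ω i)} + μ (Set.univ.pi fun _ : Fin nt => B) :=
        measure_union_le _ _
    _ ≤ μ {ω | N ≤ c * ⨆ i, f (ω i)} + ENNReal.ofReal ε := by gcongr
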